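/- Soundness of the bi-nested calculus C_LIK: if a bi-nested sequent S is provable in C_LIK, then S is valid, i.e. for every model M = (W,≤,R,V) based on a forward and downward confluent frame and every world x ∈ W, M, x ⊩ S. -/

import Mathlib

/-- Formulas of intuitionistic modal logic. -/
inductive Formula : Type where
  | atom : ℕ → Formula
  | top  : Formula
  | bot  : Formula
  | and  : Formula → Formula → Formula
  | or   : Formula → Formula → Formula
  | imp  : Formula → Formula → Formula
  | box  : Formula → Formula
  | dia  : Formula → Formula
deriving DecidableEq

/-- A model: a frame `(W, ≤, R)` together with a monotone valuation. -/
structure Model (W : Type) where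
  le : W → W → Prop
  rel : W → W → Prop
  val : ℕ → W → Prop
  le_refl : ∀ x, le x x
  le_trans : ∀ x y z, le x y → le y z → le x z
  val_mono : ∀ p x y, le x y → val p x → val p y

/-- Forward confluence: `x ≤ x'` and `R x y` yield `y'` with `R x' y'` and `y ≤ y'`. -/
def ForwardConfluent {W : Type} (M : Model W) : Prop :=
  ∀ x x' y, M.le x x' → M.rel x y → ∃ y', M.rel x' y' ∧ M.le y y'

/-- Downward confluence: `x ≤ x'` and `R x' y'` yield `y` with `R x y` and `y ≤ y'`. -/
def DownwardConfluent {W : Type} (M : Model W) : Prop :=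
  ∀ x x' y', M.le x x' → M.rel x' y' → ∃ y, M.rel x y ∧ M.le y y'

/-- The local forcing relation. -/
def Force {W : Type} (M : Model W) : W → Formula → Prop
  | x, .atom p => M.val p x
  | _, .top => True
  | _, .bot => False
  | x, .and A B => Force M x A ∧ Force M x B
  | x, .or A B => Force M x A ∨ Force M x B
  | x, .imp A B => ∀ y, M.le x y → Force M y A → Force M y B
  | x, .box A => ∀ y, M.rel x y → Force M y A
  | x, .dia A => ∃ y, M.rel x y ∧ Force M y A

/-- Elements of the succedent of a bi-nested sequent: formulas, implication
blocks `⟨Γ ⇒ Δ⟩` and modal blocks `[Γ ⇒ Δ]`.  A sequent `Γ ⇒ Δ` is a pair of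
a list of formulas and a list of succedent elements (lists are considered up
to (deep) permutation, i.e. as multisets, via the `perm` rule below). -/
inductive Delem : Type where
  | fml : Formula → Delem
  | impB : List Formula → List Delem → Delem
  | modB : List Formula → List Delem → Delem


abbrev Sequent := List Formula × List Delem

/-- Contexts: a sequent with a hole reachable through nested blocks. -/
inductive Ctx : Type where
  | hole : Ctx
  | imp : List Formula → List Delem → Ctx → Ctx
  | mod : List Formula → List Delem → Ctx → Ctx

/-- Filling the hole of a context with a sequent. -/
def Ctx.fill : Ctx → Sequent → Sequent
  | .hole, S => S
  | .imp Γ Δ C, S => (Γ, Delem.impB (Ctx.fill C S).1 (Ctx.fill C S).2 :: Δ)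
  | .mod Γ Δ C, S => (Γ, Delem.modB (Ctx.fill C S).1 (Ctx.fill C S).2 :: Δ)

/-- The `♭` operator on succedents: keep only the modal blocks, recursively
flattening their succedents. -/
def flatOp : List Delem → List Delem
  | [] => []
  | Delem.modB Φ Ψ :: rest => Delem.modB Φ (flatOp Ψ) :: flatOp rest
  | Delem.fml _ :: rest => flatOp rest
  | Delem.impB _ _ :: rest => flatOp rest

/-- The `#` operator on succedents: keep the top-level formulas, replace each
modal block `[Φ ⇒ Ψ]` by `[⇒ Ψ^#]`, drop implication blocks. -/
def sharpOp : List Delem → List Delem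
  | [] => []
  | Delem.fml A :: rest => Delem.fml A :: sharpOp rest
  | Delem.impB _ _ :: rest => sharpOp rest
  | Delem.modB _ Ψ :: rest => Delem.modB [] (sharpOp Ψ) :: sharpOp rest

mutual
/-- Deep equality-up-to-permutation of succedent elements. -/
inductive DEquiv : Delem → Delem → Prop where
  | fml (A : Formula) : DEquiv (Delem.fml A) (Delem.fml A)
  | impB {Γ Γ' : List Formula} {Δ Δ' : List Delem} :
      List.Perm Γ Γ' → LEquiv Δ Δ' → DEquiv (Delem.impB Γ Δ) (Delem.impB Γ' Δ')
  | modB {Γ Γ' : List Formula} {Δ Δ' : List Delem} :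
      List.Perm Γ Γ' → LEquiv Δ Δ' → DEquiv (Delem.modB Γ Δ) (Delem.modB Γ' Δ')

/-- Deep permutation of lists of succedent elements. -/
inductive LEquiv : List Delem → List Delem → Prop where
  | nil : LEquiv [] []
  | cons {a b : Delem} {l₁ l₂ : List Delem} :
      DEquiv a b → LEquiv l₁ l₂ → LEquiv (a :: l₁) (b :: l₂)
  | swap (a b : Delem) (l : List Delem) : LEquiv (a :: b :: l) (b :: a :: l)
  | trans {l₁ l₂ l₃ : List Delem} : LEquiv l₁ l₂ → LEquiv l₂ l₃ → LEquiv l₁ l₃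
end

/-- Two sequents are the same "multiset sequent". -/
def SeqEquiv (S T : Sequent) : Prop := List.Perm S.1 T.1 ∧ LEquiv S.2 T.2

/-- Which optional rules are present in the calculus. -/
structure CalcRules where
  interDown : Bool
  dRule : Bool
  tRule : Bool

/-- The bi-nested calculi.  `Prf ⟨true, false, false⟩` is C_LIK,
`Prf ⟨false, false, false⟩` is C_LIK⁻ (no (inter↓)),
`Prf ⟨false, true, false⟩` is C_LIKD⁻ and `Prf ⟨false, false, true⟩` is
C_LIKT⁻.  Sequents are lists-based; the rule `perm` identifies sequents that
are equal as (nested) multisets. -/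
inductive Prf (R : CalcRules) : Sequent → Prop where
  | botL (G : Ctx) (Γ : List Formula) (Δ : List Delem) :
      Prf R (G.fill (Formula.bot :: Γ, Δ))
  | topR (G : Ctx) (Γ : List Formula) (Δ : List Delem) :
      Prf R (G.fill (Γ, Delem.fml Formula.top :: Δ))
  | id (G : Ctx) (Γ : List Formula) (Δ : List Delem) (p : ℕ) :
      Prf R (G.fill (Formula.atom p :: Γ, Delem.fml (Formula.atom p) :: Δ))
  | andL (G : Ctx) (Γ : List Formula) (Δ : List Delem) (A B : Formula) :
      Prf R (G.fill (A :: B :: Γ, Δ)) → Prf R (G.fill (Formula.and A B :: Γ, Δ))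
  | andR (G : Ctx) (Γ : List Formula) (Δ : List Delem) (A B : Formula) :
      Prf R (G.fill (Γ, Delem.fml A :: Δ)) → Prf R (G.fill (Γ, Delem.fml B :: Δ)) →
      Prf R (G.fill (Γ, Delem.fml (Formula.and A B) :: Δ))
  | orL (G : Ctx) (Γ : List Formula) (Δ : List Delem) (A B : Formula) :
      Prf R (G.fill (A :: Γ, Δ)) → Prf R (G.fill (B :: Γ, Δ)) →
      Prf R (G.fill (Formula.or A B :: Γ, Δ))
  | orR (G : Ctx) (Γ : List Formula) (Δ : List Delem) (A B : Formula) :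
      Prf R (G.fill (Γ, Delem.fml A :: Delem.fml B :: Δ)) →
      Prf R (G.fill (Γ, Delem.fml (Formula.or A B) :: Δ))
  | impL (G : Ctx) (Γ : List Formula) (Δ : List Delem) (A B : Formula) :
      Prf R (G.fill (Formula.imp A B :: Γ, Delem.fml A :: Δ)) →
      Prf R (G.fill (B :: Γ, Δ)) →
      Prf R (G.fill (Formula.imp A B :: Γ, Δ))
  | impR (G : Ctx) (Γ : List Formula) (Δ : List Delem) (A B : Formula) :
      Prf R (G.fill (Γ, Delem.impB [A] [Delem.fml B] :: Δ)) →
      Prf R (G.fill (Γ, Delem.fml (Formula.imp A B) :: Δ))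
  | boxL (G : Ctx) (Γ : List Formula) (Δ : List Delem) (A : Formula)
      (Ss : List Formula) (Ps : List Delem) :
      Prf R (G.fill (Formula.box A :: Γ, Delem.modB (A :: Ss) Ps :: Δ)) →
      Prf R (G.fill (Formula.box A :: Γ, Delem.modB Ss Ps :: Δ))
  | boxR (G : Ctx) (Γ : List Formula) (Δ : List Delem) (A : Formula) :
      Prf R (G.fill (Γ, Delem.modB [] [Delem.fml A] :: Δ)) →
      Prf R (G.fill (Γ, Delem.fml (Formula.box A) :: Δ))
  | diaL (G : Ctx) (Γ : List Formula) (Δ : List Delem) (A : Formula) :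
      Prf R (G.fill (Γ, Delem.modB [A] [] :: Δ)) →
      Prf R (G.fill (Formula.dia A :: Γ, Δ))
  | diaR (G : Ctx) (Γ : List Formula) (Δ : List Delem) (A : Formula)
      (Ss : List Formula) (Ps : List Delem) :
      Prf R (G.fill (Γ, Delem.fml (Formula.dia A) :: Delem.modB Ss (Delem.fml A :: Ps) :: Δ)) →
      Prf R (G.fill (Γ, Delem.fml (Formula.dia A) :: Delem.modB Ss Ps :: Δ))
  | transR (G : Ctx) (Γ Γ' : List Formula) (Δ : List Delem)
      (Ss : List Formula) (Ps : List Delem) :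
      Prf R (G.fill (Γ' ++ Γ, Delem.impB (Γ' ++ Ss) Ps :: Δ)) →
      Prf R (G.fill (Γ' ++ Γ, Delem.impB Ss Ps :: Δ))
  | interF (G : Ctx) (Γ : List Formula) (Δ : List Delem)
      (Ss : List Formula) (Ps : List Delem) (Ls : List Formula) (Θ : List Delem) :
      Prf R (G.fill (Γ, Delem.impB Ss (Delem.modB Ls (flatOp Θ) :: Ps) :: Delem.modB Ls Θ :: Δ)) →
      Prf R (G.fill (Γ, Delem.impB Ss Ps :: Delem.modB Ls Θ :: Δ))
  | interD (G : Ctx) (Γ : List Formula) (Δ : List Delem)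
      (Ss : List Formula) (Ps : List Delem) (Ls : List Formula) (Θ : List Delem) :
      R.interDown = true →
      Prf R (G.fill (Γ, Delem.impB Ss (Delem.modB Ls Θ :: Ps) :: Delem.modB [] (sharpOp Θ) :: Δ)) →
      Prf R (G.fill (Γ, Delem.impB Ss (Delem.modB Ls Θ :: Ps) :: Δ))
  | dRule (G : Ctx) (Γ : List Formula) (Δ : List Delem) :
      R.dRule = true →
      Prf R (G.fill (Γ, Delem.modB [] [] :: Δ)) → Prf R (G.fill (Γ, Δ))
  | tBox (G : Ctx) (Γ : List Formula) (Δ : List Delem) (A : Formula) :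
      R.tRule = true →
      Prf R (G.fill (Formula.box A :: A :: Γ, Δ)) → Prf R (G.fill (Formula.box A :: Γ, Δ))
  | tDia (G : Ctx) (Γ : List Formula) (Δ : List Delem) (A : Formula) :
      R.tRule = true →
      Prf R (G.fill (Γ, Delem.fml (Formula.dia A) :: Delem.fml A :: Δ)) →
      Prf R (G.fill (Γ, Delem.fml (Formula.dia A) :: Δ))
  | perm (S T : Sequent) : SeqEquiv S T → Prf R S → Prf R T

mutual
/-- Forcing of succedent elements at a world. -/
def ForceD {W : Type} (M : Model W) : W → Delem → Prop
  | x, .fml A => Force M x A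
  | x, .impB Γ Δ => ∀ y, M.le x y → ((∃ A ∈ Γ, ¬ Force M y A) ∨ ForceAny M y Δ)
  | x, .modB Γ Δ => ∀ y, M.rel x y → ((∃ A ∈ Γ, ¬ Force M y A) ∨ ForceAny M y Δ)

/-- Some element of the list is forced. -/
def ForceAny {W : Type} (M : Model W) : W → List Delem → Prop
  | _, [] => False
  | x, d :: ds => ForceD M x d ∨ ForceAny M x ds
end

/-- Forcing of a sequent: some antecedent formula fails or some succedent
element is forced. -/
def ForceSeq {W : Type} (M : Model W) (x : W) (S : Sequent) : Prop :=
  (∃ A ∈ S.1, ¬ Force M x A) ∨ ForceAny M x S.2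

section Sound

variable {W : Type} {M : Model W}

theorem force_mono (fc : ForwardConfluent M) (dc : DownwardConfluent M) :
    ∀ (A : Formula) {x y : W}, M.le x y → Force M x A → Force M y A := by
  intro A
  induction A with
  | atom p => intro x y h hf; exact M.val_mono p x y h hf
  | top => intro x y h hf; trivial
  | bot => intro x y h hf; exact hf.elim
  | and A B ihA ihB =>
      intro x y h hf
      exact ⟨ihA h hf.1, ihB h hf.2⟩
  | or A B ihA ihB =>
      intro x y h hf
      rcases hf with hf | hf
      · exact Or.inl (ihA h hf)
      · exact Or.inr (ihB h hf)
  | imp A B ihA ihB =>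
      intro x y h hf z hz ha
      exact hf z (M.le_trans _ _ _ h hz) ha
  | box A ih =>
      intro x y h hf z hz
      obtain ⟨w, hw, hwz⟩ := dc x y z h hz
      exact ih hwz (hf w hw)
  | dia A ih =>
      intro x y h hf
      obtain ⟨z, hz, hfz⟩ := hf
      obtain ⟨z', hz', hzz'⟩ := fc x y z h hz
      exact ⟨z', hz', ih hzz' hfz⟩

theorem flat_lemma (fc : ForwardConfluent M) (dc : DownwardConfluent M) :
    ∀ (Θ : List Delem), ∀ (z z' : W), M.le z z' → ForceAny M z' (flatOp Θ) → ForceAny M z Θ := by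
  intro Θ
  induction Θ using flatOp.induct with
  | case1 => intro z z' _ h; simp [flatOp, ForceAny] at h
  | case2 Λ Ψ rest ihΨ ihrest =>
      intro z z' hle h
      simp only [flatOp, ForceAny, ForceD] at h ⊢
      rcases h with h | h
      · left
        intro w hw
        obtain ⟨w', hw', hww'⟩ := fc z z' w hle hw
        rcases h w' hw' with ⟨A, hA, hnA⟩ | h2
        · exact Or.inl ⟨A, hA, fun hf => hnA (force_mono fc dc A hww' hf)⟩
        · exact Or.inr (ihΨ w w' hww' h2)
      · exact Or.inr (ihrest z z' hle h)
  | case3 A rest ihrest =>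
      intro z z' hle h
      simp only [flatOp] at h
      simp only [ForceAny]
      exact Or.inr (ihrest z z' hle h)
  | case4 Γ Δ rest ihrest =>
      intro z z' hle h
      simp only [flatOp] at h
      simp only [ForceAny]
      exact Or.inr (ihrest z z' hle h)

theorem sharp_lemma (fc : ForwardConfluent M) (dc : DownwardConfluent M) :
    ∀ (Θ : List Delem), ∀ (w z : W), M.le w z → ForceAny M w (sharpOp Θ) → ForceAny M z Θ := by
  intro Θ
  induction Θ using sharpOp.induct with
  | case1 => intro w z _ h; simp [sharpOp, ForceAny] at h
  | case2 A rest ihrest =>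
      intro w z hle h
      simp only [sharpOp, ForceAny, ForceD] at h ⊢
      rcases h with h | h
      · exact Or.inl (force_mono fc dc A hle h)
      · exact Or.inr (ihrest w z hle h)
  | case3 Γ Δ rest ihrest =>
      intro w z hle h
      simp only [sharpOp] at h
      simp only [ForceAny]
      exact Or.inr (ihrest w z hle h)
  | case4 Φ Ψ rest ihΨ ihrest =>
      intro w z hle h
      simp only [sharpOp, ForceAny, ForceD] at h ⊢
      rcases h with h | h
      · left
        intro u hu
        obtain ⟨v, hv, hvu⟩ := dc w z u hle hu
        rcases h v hv with ⟨A, hA, _⟩ | h2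
        · simp at hA
        · exact Or.inr (ihΨ v u hvu h2)
      · exact Or.inr (ihrest w z hle h)

theorem lequiv_force {l₁ l₂ : List Delem} (h : LEquiv l₁ l₂) :
    ∀ x : W, ForceAny M x l₁ ↔ ForceAny M x l₂ := by
  refine LEquiv.rec (motive_1 := fun a b _ => ∀ x : W, ForceD M x a ↔ ForceD M x b)
    (motive_2 := fun l₁ l₂ _ => ∀ x : W, ForceAny M x l₁ ↔ ForceAny M x l₂)
    ?_ ?_ ?_ ?_ ?_ ?_ ?_ h
  · intro A x; exact Iff.rfl
  · intro Γ Γ' Δ Δ' hΓ hΔ ihΔ x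
    simp only [ForceD]
    refine forall₂_congr fun y hy => or_congr ?_ (ihΔ y)
    exact exists_congr fun A => and_congr_left fun _ => by rw [hΓ.mem_iff]
  · intro Γ Γ' Δ Δ' hΓ hΔ ihΔ x
    simp only [ForceD]
    refine forall₂_congr fun y hy => or_congr ?_ (ihΔ y)
    exact exists_congr fun A => and_congr_left fun _ => by rw [hΓ.mem_iff]
  · intro x; exact Iff.rfl
  · intro a b l₁' l₂' hab hl iha ihl x
    simp only [ForceAny]
    exact or_congr (iha x) (ihl x)
  · intro a b l x
    simp only [ForceAny]
    tauto
  · intro l₁' l₂' l₃' h12 h23 ih12 ih23 x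
    exact (ih12 x).trans (ih23 x)

theorem seqequiv_force {S T : Sequent} (h : SeqEquiv S T) (x : W) :
    ForceSeq M x S ↔ ForceSeq M x T := by
  obtain ⟨h1, h2⟩ := h
  unfold ForceSeq
  refine or_congr ?_ (lequiv_force h2 x)
  exact exists_congr fun A => and_congr_left fun _ => by rw [h1.mem_iff]

theorem ctx_sound {P C : Sequent}
    (loc : ∀ x : W, ForceSeq M x P → ForceSeq M x C) :
    ∀ (G : Ctx) (x : W), ForceSeq M x (G.fill P) → ForceSeq M x (G.fill C) := by
  intro G
  induction G with
  | hole => exact loc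
  | imp Γ Δ C' ih =>
      intro x h
      simp only [Ctx.fill, ForceSeq, ForceAny, ForceD] at h ⊢
      rcases h with h | h | h
      · exact Or.inl h
      · exact Or.inr (Or.inl fun y hy => ih y (h y hy))
      · exact Or.inr (Or.inr h)
  | mod Γ Δ C' ih =>
      intro x h
      simp only [Ctx.fill, ForceSeq, ForceAny, ForceD] at h ⊢
      rcases h with h | h | h
      · exact Or.inl h
      · exact Or.inr (Or.inl fun y hy => ih y (h y hy))
      · exact Or.inr (Or.inr h)

theorem ctx_sound2 {P1 P2 C : Sequent}
    (loc : ∀ x : W, ForceSeq M x P1 → ForceSeq M x P2 → ForceSeq M x C) :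
    ∀ (G : Ctx) (x : W), ForceSeq M x (G.fill P1) → ForceSeq M x (G.fill P2) →
      ForceSeq M x (G.fill C) := by
  intro G
  induction G with
  | hole => exact loc
  | imp Γ Δ C' ih =>
      intro x h1 h2
      simp only [Ctx.fill, ForceSeq, ForceAny, ForceD] at h1 h2 ⊢
      rcases h1 with h1 | h1 | h1
      · exact Or.inl h1
      · rcases h2 with h2 | h2 | h2
        · exact Or.inl h2
        · exact Or.inr (Or.inl fun y hy => ih y (h1 y hy) (h2 y hy))
        · exact Or.inr (Or.inr h2)
      · exact Or.inr (Or.inr h1)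
  | mod Γ Δ C' ih =>
      intro x h1 h2
      simp only [Ctx.fill, ForceSeq, ForceAny, ForceD] at h1 h2 ⊢
      rcases h1 with h1 | h1 | h1
      · exact Or.inl h1
      · rcases h2 with h2 | h2 | h2
        · exact Or.inl h2
        · exact Or.inr (Or.inl fun y hy => ih y (h1 y hy) (h2 y hy))
        · exact Or.inr (Or.inr h2)
      · exact Or.inr (Or.inr h1)

theorem ctx_valid {S : Sequent}
    (loc : ∀ x : W, ForceSeq M x S) :
    ∀ (G : Ctx) (x : W), ForceSeq M x (G.fill S) := by
  intro G
  induction G with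
  | hole => exact loc
  | imp Γ Δ C' ih =>
      intro x
      simp only [Ctx.fill, ForceSeq, ForceAny, ForceD]
      exact Or.inr (Or.inl fun y _ => ih y)
  | mod Γ Δ C' ih =>
      intro x
      simp only [Ctx.fill, ForceSeq, ForceAny, ForceD]
      exact Or.inr (Or.inl fun y _ => ih y)

end Sound

section Local

variable {W : Type} {M : Model W} (fc : ForwardConfluent M) (dc : DownwardConfluent M)

open Classical

theorem loc_botL (Γ : List Formula) (Δ : List Delem) (x : W) :
    ForceSeq M x (Formula.bot :: Γ, Δ) :=
  Or.inl ⟨Formula.bot, by simp, by simp [Force]⟩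

theorem loc_topR (Γ : List Formula) (Δ : List Delem) (x : W) :
    ForceSeq M x (Γ, Delem.fml Formula.top :: Δ) :=
  Or.inr (Or.inl (by simp [ForceD, Force]))

theorem loc_id (Γ : List Formula) (Δ : List Delem) (p : ℕ) (x : W) :
    ForceSeq M x (Formula.atom p :: Γ, Delem.fml (Formula.atom p) :: Δ) := by
  by_cases h : Force M x (Formula.atom p)
  · exact Or.inr (Or.inl (by simpa [ForceD] using h))
  · exact Or.inl ⟨Formula.atom p, by simp, h⟩

theorem loc_andL (Γ : List Formula) (Δ : List Delem) (A B : Formula) (x : W)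
    (h : ForceSeq M x (A :: B :: Γ, Δ)) :
    ForceSeq M x (Formula.and A B :: Γ, Δ) := by
  rcases h with ⟨C, hC, hnC⟩ | h
  · rcases List.mem_cons.mp hC with rfl | hC2
    · exact Or.inl ⟨_, List.mem_cons_self, fun hf => hnC hf.1⟩
    · rcases List.mem_cons.mp hC2 with rfl | hC3
      · exact Or.inl ⟨_, List.mem_cons_self, fun hf => hnC hf.2⟩
      · exact Or.inl ⟨C, by simp [hC3], hnC⟩
  · exact Or.inr h

theorem loc_andR (Γ : List Formula) (Δ : List Delem) (A B : Formula) (x : W)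
    (h1 : ForceSeq M x (Γ, Delem.fml A :: Δ)) (h2 : ForceSeq M x (Γ, Delem.fml B :: Δ)) :
    ForceSeq M x (Γ, Delem.fml (Formula.and A B) :: Δ) := by
  rcases h1 with h1 | h1
  · exact Or.inl h1
  · simp only [ForceAny, ForceD] at h1
    rcases h1 with h1 | h1
    · rcases h2 with h2 | h2
      · exact Or.inl h2
      · simp only [ForceAny, ForceD] at h2
        rcases h2 with h2 | h2
        · exact Or.inr (Or.inl (show Force M x (Formula.and A B) from ⟨h1, h2⟩))
        · exact Or.inr (by simp only [ForceAny]; exact Or.inr h2)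
    · exact Or.inr (by simp only [ForceAny]; exact Or.inr h1)

theorem loc_orL (Γ : List Formula) (Δ : List Delem) (A B : Formula) (x : W)
    (h1 : ForceSeq M x (A :: Γ, Δ)) (h2 : ForceSeq M x (B :: Γ, Δ)) :
    ForceSeq M x (Formula.or A B :: Γ, Δ) := by
  by_cases hor : Force M x (Formula.or A B)
  · rcases hor with hA | hB
    · rcases h1 with ⟨C, hC, hnC⟩ | h1
      · rcases List.mem_cons.mp hC with rfl | hC
        · exact absurd hA hnC
        · exact Or.inl ⟨C, by simp [hC], hnC⟩
      · exact Or.inr h1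
    · rcases h2 with ⟨C, hC, hnC⟩ | h2
      · rcases List.mem_cons.mp hC with rfl | hC
        · exact absurd hB hnC
        · exact Or.inl ⟨C, by simp [hC], hnC⟩
      · exact Or.inr h2
  · exact Or.inl ⟨Formula.or A B, by simp, hor⟩

theorem loc_orR (Γ : List Formula) (Δ : List Delem) (A B : Formula) (x : W)
    (h : ForceSeq M x (Γ, Delem.fml A :: Delem.fml B :: Δ)) :
    ForceSeq M x (Γ, Delem.fml (Formula.or A B) :: Δ) := by
  rcases h with h | h
  · exact Or.inl h
  · simp only [ForceAny, ForceD] at h ⊢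
    rcases h with h | h | h
    · exact Or.inr (Or.inl (Or.inl h))
    · exact Or.inr (Or.inl (Or.inr h))
    · exact Or.inr (Or.inr h)

theorem loc_impL (Γ : List Formula) (Δ : List Delem) (A B : Formula) (x : W)
    (h1 : ForceSeq M x (Formula.imp A B :: Γ, Delem.fml A :: Δ))
    (h2 : ForceSeq M x (B :: Γ, Δ)) :
    ForceSeq M x (Formula.imp A B :: Γ, Δ) := by
  by_cases himp : Force M x (Formula.imp A B)
  · rcases h1 with ⟨C, hC, hnC⟩ | h1
    · rcases List.mem_cons.mp hC with rfl | hC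
      · exact absurd himp hnC
      · exact Or.inl ⟨C, by simp [hC], hnC⟩
    · simp only [ForceAny, ForceD] at h1
      rcases h1 with h1 | h1
      · -- Force M x A, hence Force M x B
        have hB : Force M x B := himp x (M.le_refl x) h1
        rcases h2 with ⟨C, hC, hnC⟩ | h2
        · rcases List.mem_cons.mp hC with rfl | hC
          · exact absurd hB hnC
          · exact Or.inl ⟨C, by simp [hC], hnC⟩
        · exact Or.inr h2
      · exact Or.inr h1
  · exact Or.inl ⟨Formula.imp A B, by simp, himp⟩

theorem loc_impR (Γ : List Formula) (Δ : List Delem) (A B : Formula) (x : W)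
    (h : ForceSeq M x (Γ, Delem.impB [A] [Delem.fml B] :: Δ)) :
    ForceSeq M x (Γ, Delem.fml (Formula.imp A B) :: Δ) := by
  rcases h with h | h
  · exact Or.inl h
  · simp only [ForceAny, ForceD] at h ⊢
    rcases h with h | h
    · refine Or.inr (Or.inl ?_)
      show Force M x (Formula.imp A B)
      intro y hy ha
      rcases h y hy with ⟨C, hC, hnC⟩ | hB | hF
      · simp only [List.mem_singleton] at hC
        subst hC
        exact absurd ha hnC
      · exact hB
      · exact hF.elim
    · exact Or.inr (Or.inr h)

theorem loc_boxL (Γ : List Formula) (Δ : List Delem) (A : Formula)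
    (Ss : List Formula) (Ps : List Delem) (x : W)
    (h : ForceSeq M x (Formula.box A :: Γ, Delem.modB (A :: Ss) Ps :: Δ)) :
    ForceSeq M x (Formula.box A :: Γ, Delem.modB Ss Ps :: Δ) := by
  by_cases hb : Force M x (Formula.box A)
  · rcases h with ⟨C, hC, hnC⟩ | h
    · exact Or.inl ⟨C, hC, hnC⟩
    · simp only [ForceAny, ForceD] at h ⊢
      rcases h with h | h
      · refine Or.inr (Or.inl ?_)
        intro y hy
        rcases h y hy with ⟨C, hC, hnC⟩ | h2
        · rcases List.mem_cons.mp hC with rfl | hC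
          · exact absurd (hb y hy) hnC
          · exact Or.inl ⟨C, hC, hnC⟩
        · exact Or.inr h2
      · exact Or.inr (Or.inr h)
  · exact Or.inl ⟨Formula.box A, by simp, hb⟩

theorem loc_boxR (Γ : List Formula) (Δ : List Delem) (A : Formula) (x : W)
    (h : ForceSeq M x (Γ, Delem.modB [] [Delem.fml A] :: Δ)) :
    ForceSeq M x (Γ, Delem.fml (Formula.box A) :: Δ) := by
  rcases h with h | h
  · exact Or.inl h
  · simp only [ForceAny, ForceD] at h ⊢
    rcases h with h | h
    · refine Or.inr (Or.inl ?_)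
      show Force M x (Formula.box A)
      intro y hy
      rcases h y hy with ⟨C, hC, _⟩ | hA | hF
      · simp at hC
      · exact hA
      · exact hF.elim
    · exact Or.inr (Or.inr h)

theorem loc_diaL (Γ : List Formula) (Δ : List Delem) (A : Formula) (x : W)
    (h : ForceSeq M x (Γ, Delem.modB [A] [] :: Δ)) :
    ForceSeq M x (Formula.dia A :: Γ, Δ) := by
  by_cases hd : Force M x (Formula.dia A)
  · obtain ⟨y, hy, hA⟩ := hd
    rcases h with ⟨C, hC, hnC⟩ | h
    · exact Or.inl ⟨C, by simp [hC], hnC⟩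
    · simp only [ForceAny, ForceD] at h
      rcases h with h | h
      · rcases h y hy with ⟨C, hC, hnC⟩ | hF
        · simp only [List.mem_singleton] at hC
          subst hC
          exact absurd hA hnC
        · exact hF.elim
      · exact Or.inr h
  · exact Or.inl ⟨Formula.dia A, by simp, hd⟩

theorem loc_diaR (Γ : List Formula) (Δ : List Delem) (A : Formula)
    (Ss : List Formula) (Ps : List Delem) (x : W)
    (h : ForceSeq M x (Γ, Delem.fml (Formula.dia A) :: Delem.modB Ss (Delem.fml A :: Ps) :: Δ)) :
    ForceSeq M x (Γ, Delem.fml (Formula.dia A) :: Delem.modB Ss Ps :: Δ) := by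
  rcases h with h | h
  · exact Or.inl h
  · simp only [ForceAny, ForceD] at h ⊢
    rcases h with h | h | h
    · exact Or.inr (Or.inl h)
    · by_cases hm : ∀ y, M.rel x y → ((∃ C ∈ Ss, ¬ Force M y C) ∨ ForceAny M y Ps)
      · exact Or.inr (Or.inr (Or.inl hm))
      · push_neg at hm
        obtain ⟨y, hy, hSs, hnPs⟩ := hm
        rcases h y hy with ⟨C, hC, hnC⟩ | hA | hPs
        · exact absurd (hSs C hC) hnC
        · exact Or.inr (Or.inl ⟨y, hy, hA⟩)
        · exact absurd hPs hnPs
    · exact Or.inr (Or.inr (Or.inr h))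

include fc dc in
theorem loc_transR (Γ Γ' : List Formula) (Δ : List Delem)
    (Ss : List Formula) (Ps : List Delem) (x : W)
    (h : ForceSeq M x (Γ' ++ Γ, Delem.impB (Γ' ++ Ss) Ps :: Δ)) :
    ForceSeq M x (Γ' ++ Γ, Delem.impB Ss Ps :: Δ) := by
  by_cases hΓ' : ∀ A ∈ Γ', Force M x A
  · rcases h with h | h
    · exact Or.inl h
    · simp only [ForceAny, ForceD] at h ⊢
      rcases h with h | h
      · refine Or.inr (Or.inl ?_)
        intro y hy
        rcases h y hy with ⟨C, hC, hnC⟩ | h2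
        · rcases List.mem_append.mp hC with hC | hC
          · exact absurd (force_mono fc dc C hy (hΓ' C hC)) hnC
          · exact Or.inl ⟨C, hC, hnC⟩
        · exact Or.inr h2
      · exact Or.inr (Or.inr h)
  · push_neg at hΓ'
    obtain ⟨A, hA, hnA⟩ := hΓ'
    exact Or.inl ⟨A, List.mem_append.mpr (Or.inl hA), hnA⟩

include fc dc in
theorem loc_interF (Γ : List Formula) (Δ : List Delem)
    (Ss : List Formula) (Ps : List Delem) (Ls : List Formula) (Θ : List Delem) (x : W)
    (h : ForceSeq M x
      (Γ, Delem.impB Ss (Delem.modB Ls (flatOp Θ) :: Ps) :: Delem.modB Ls Θ :: Δ)) :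
    ForceSeq M x (Γ, Delem.impB Ss Ps :: Delem.modB Ls Θ :: Δ) := by
  rcases h with h | h
  · exact Or.inl h
  · simp only [ForceAny, ForceD] at h ⊢
    rcases h with h | h | h
    · by_cases hm : ∀ z, M.rel x z → ((∃ A ∈ Ls, ¬ Force M z A) ∨ ForceAny M z Θ)
      · exact Or.inr (Or.inr (Or.inl hm))
      · push_neg at hm
        obtain ⟨z, hz, hLs, hnΘ⟩ := hm
        refine Or.inr (Or.inl ?_)
        intro y hy
        rcases h y hy with ⟨C, hC, hnC⟩ | h2
        · exact Or.inl ⟨C, hC, hnC⟩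
        · rcases h2 with h2 | h2
          · -- modB Ls (flatOp Θ) forced at y: contradiction
            obtain ⟨z', hz', hzz'⟩ := fc x y z hy hz
            rcases h2 z' hz' with ⟨A, hA, hnA⟩ | h3
            · exact absurd (force_mono fc dc A hzz' (hLs A hA)) hnA
            · exact absurd (flat_lemma fc dc Θ z z' hzz' h3) hnΘ
          · exact Or.inr h2
    · exact Or.inr (Or.inr (Or.inl h))
    · exact Or.inr (Or.inr (Or.inr h))

include fc dc in
theorem loc_interD (Γ : List Formula) (Δ : List Delem)
    (Ss : List Formula) (Ps : List Delem) (Ls : List Formula) (Θ : List Delem) (x : W)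
    (h : ForceSeq M x
      (Γ, Delem.impB Ss (Delem.modB Ls Θ :: Ps) :: Delem.modB [] (sharpOp Θ) :: Δ)) :
    ForceSeq M x (Γ, Delem.impB Ss (Delem.modB Ls Θ :: Ps) :: Δ) := by
  rcases h with h | h
  · exact Or.inl h
  · simp only [ForceAny, ForceD] at h ⊢
    rcases h with h | h | h
    · exact Or.inr (Or.inl h)
    · -- modB [] (sharpOp Θ) forced at x
      refine Or.inr (Or.inl ?_)
      intro y hy
      refine Or.inr (Or.inl ?_)
      intro z hz
      obtain ⟨w, hw, hwz⟩ := dc x y z hy hz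
      rcases h w hw with ⟨A, hA, _⟩ | h2
      · simp at hA
      · exact Or.inr (sharp_lemma fc dc Θ w z hwz h2)
    · exact Or.inr (Or.inr h)

end Local

theorem sound_aux {W : Type} {M : Model W} (fc : ForwardConfluent M) (dc : DownwardConfluent M)
    {S : Sequent} (h : Prf ⟨true, false, false⟩ S) : ∀ x : W, ForceSeq M x S := by
  induction h with
  | botL G Γ Δ => exact ctx_valid (loc_botL Γ Δ) G
  | topR G Γ Δ => exact ctx_valid (loc_topR Γ Δ) G
  | id G Γ Δ p => exact ctx_valid (loc_id Γ Δ p) G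
  | andL G Γ Δ A B _ ih => exact fun x => ctx_sound (loc_andL Γ Δ A B) G x (ih x)
  | andR G Γ Δ A B _ _ ih1 ih2 =>
      exact fun x => ctx_sound2 (fun x => loc_andR Γ Δ A B x) G x (ih1 x) (ih2 x)
  | orL G Γ Δ A B _ _ ih1 ih2 =>
      exact fun x => ctx_sound2 (fun x => loc_orL Γ Δ A B x) G x (ih1 x) (ih2 x)
  | orR G Γ Δ A B _ ih => exact fun x => ctx_sound (loc_orR Γ Δ A B) G x (ih x)
  | impL G Γ Δ A B _ _ ih1 ih2 =>
      exact fun x => ctx_sound2 (fun x => loc_impL Γ Δ A B x) G x (ih1 x) (ih2 x)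
  | impR G Γ Δ A B _ ih => exact fun x => ctx_sound (loc_impR Γ Δ A B) G x (ih x)
  | boxL G Γ Δ A Ss Ps _ ih => exact fun x => ctx_sound (loc_boxL Γ Δ A Ss Ps) G x (ih x)
  | boxR G Γ Δ A _ ih => exact fun x => ctx_sound (loc_boxR Γ Δ A) G x (ih x)
  | diaL G Γ Δ A _ ih => exact fun x => ctx_sound (loc_diaL Γ Δ A) G x (ih x)
  | diaR G Γ Δ A Ss Ps _ ih => exact fun x => ctx_sound (loc_diaR Γ Δ A Ss Ps) G x (ih x)
  | transR G Γ Γ' Δ Ss Ps _ ih =>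
      exact fun x => ctx_sound (loc_transR fc dc Γ Γ' Δ Ss Ps) G x (ih x)
  | interF G Γ Δ Ss Ps Ls Θ _ ih =>
      exact fun x => ctx_sound (loc_interF fc dc Γ Δ Ss Ps Ls Θ) G x (ih x)
  | interD G Γ Δ Ss Ps Ls Θ hr _ ih =>
      exact fun x => ctx_sound (loc_interD fc dc Γ Δ Ss Ps Ls Θ) G x (ih x)
  | dRule G Γ Δ hr => exact absurd hr (by simp)
  | tBox G Γ Δ A hr => exact absurd hr (by simp)
  | tDia G Γ Δ A hr => exact absurd hr (by simp)
  | perm S T hST _ ih => exact fun x => (seqequiv_force hST x).mp (ih x)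

/-- Soundness of the bi-nested calculus C_LIK: a provable sequent is forced
at every world of every model based on a forward and downward confluent
frame. -/
theorem clik_soundness (S : Sequent)
    (h : Prf ⟨true, false, false⟩ S) :
    ∀ (W : Type) (M : Model W), Nonempty W →
      ForwardConfluent M → DownwardConfluent M →
      ∀ x : W, ForceSeq M x S := by
  intro W M _ fc dc x
  exact sound_aux fc dc h x
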